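/- Let S : ℝ^d → [0,∞) be integrable and let k(x,y) = ∫_{ℝ^d} cos(⟨u, x−y⟩) S(u) du. Then for every Schwartz function f ∈ 𝒮(ℝ^d) with ∫_{ℝ^d} |f̂(u)|² S(u)^{−1} du < ∞, every x ∈ ℝ^d, all points x₁,…,x_n ∈ ℝ^d and every λ ∈ ℝⁿ, one has (f(x) − Σᵢ λᵢ f(xᵢ))² ≤ (2π)^{−2d} (∫_{ℝ^d} |f̂(u)|² S(u)^{−1} du) · Qₙ(λ), where Qₙ(λ) = k(x,x) − 2 Σᵢ λᵢ k(x,xᵢ) + Σᵢⱼ λᵢλⱼ k(xᵢ,xⱼ). -/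

import Mathlib

open MeasureTheory Filter
open scoped RealInnerProductSpace FourierTransform

/-- The Fourier transform `f̂(u) = ∫ f(t) e^{−i⟨u,t⟩} dt`. -/
noncomputable def fourierT {d : ℕ} (f : EuclideanSpace ℝ (Fin d) → ℝ)
    (u : EuclideanSpace ℝ (Fin d)) : ℂ :=
  ∫ t, Complex.exp (-(Complex.I * (⟪u, t⟫ : ℝ))) * (f t : ℂ)

/-- The quadratic form `Qₙ(λ)`. -/
noncomputable def krigQ {d : ℕ}
    (k : EuclideanSpace ℝ (Fin d) → EuclideanSpace ℝ (Fin d) → ℝ)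
    (x : EuclideanSpace ℝ (Fin d)) {n : ℕ}
    (pts : Fin n → EuclideanSpace ℝ (Fin d)) (lam : Fin n → ℝ) : ℝ :=
  k x x - 2 * ∑ i, lam i * k x (pts i)
    + ∑ i, ∑ j, lam i * lam j * k (pts i) (pts j)

private lemma cs_aux {A B t : ℝ} (hA : 0 ≤ A) (hB : 0 ≤ B) (ht : 0 ≤ t)
    (h : ∀ ε : ℝ, 0 < ε → t ≤ ε / 2 * A + 1 / (2 * ε) * B) : t ^ 2 ≤ A * B := by
  have key : ∀ x : ℝ, 0 ≤ A * (x * x) + -(2 * t) * x + B := by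
    intro x
    rcases le_or_gt x 0 with hx | hx
    · nlinarith [mul_nonneg hA (mul_self_nonneg x), mul_nonpos_of_nonneg_of_nonpos ht hx]
    · have h1 := h x hx
      have hx' : x ≠ 0 := ne_of_gt hx
      have e : 2 * x * (x / 2 * A + 1 / (2 * x) * B) = A * (x * x) + B := by
        field_simp
      have h2 := mul_le_mul_of_nonneg_left h1 (by linarith : (0:ℝ) ≤ 2 * x)
      rw [e] at h2
      nlinarith
  have hd := discrim_le_zero key
  simp only [discrim] at hd
  nlinarith

private noncomputable def schwartzOfReal {D : Type*} [NormedAddCommGroup D] [NormedSpace ℝ D]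
    (f : SchwartzMap D ℝ) : SchwartzMap D ℂ where
  toFun t := (f t : ℂ)
  smooth' := Complex.ofRealCLM.contDiff.comp f.smooth'
  decay' k n := by
    obtain ⟨C, hC⟩ := f.decay' k n
    refine ⟨C, fun x => ?_⟩
    have he : (fun t => ((f t : ℝ) : ℂ)) = (RCLike.ofRealLI (K := ℂ)) ∘ ⇑f := by
      ext t; rfl
    have hnorm : ‖iteratedFDeriv ℝ n (⇑(RCLike.ofRealLI (K := ℂ)) ∘ ⇑f) x‖
        = ‖iteratedFDeriv ℝ n (⇑f) x‖ :=
      (RCLike.ofRealLI (K := ℂ)).norm_iteratedFDeriv_comp_left (f.smooth'.contDiffAt (x := x))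
        (by exact_mod_cast le_top)
    rw [he, hnorm]
    exact hC x

private lemma exp_inner_real (a b : ℝ) :
    ⟪Complex.exp (Complex.I * a), Complex.exp (Complex.I * b)⟫ = Real.cos (a - b) := by
  rw [Complex.inner, ← Complex.exp_conj, ← Complex.exp_add]
  have h : Complex.I * b + (starRingEnd ℂ) (Complex.I * a) = ((b - a : ℝ) : ℂ) * Complex.I := by
    simp only [map_mul, Complex.conj_I, Complex.conj_ofReal]
    push_cast; ring
  rw [h, Complex.exp_ofReal_mul_I_re, show b - a = -(a - b) by ring, Real.cos_neg]

private lemma norm_exp_I_mul (r : ℝ) : ‖Complex.exp (Complex.I * r)‖ = 1 := by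
  rw [mul_comm]; exact Complex.norm_exp_ofReal_mul_I r


/-- For a stationary kernel with integrable spectral density `S` and a Schwartz
function `f` with `∫ |f̂|² S⁻¹ < ∞`, one has
`(f(x) − Σᵢ λᵢ f(xᵢ))² ≤ (2π)^{−2d} (∫ |f̂(u)|² S(u)⁻¹ du) · Qₙ(λ)`. -/
theorem schwartz_pred_error_le_of_spectral {d : ℕ}
    (S : EuclideanSpace ℝ (Fin d) → ℝ)
    (hS_nonneg : ∀ u, 0 ≤ S u) (hS_int : Integrable S)
    (hS_pos : ∀ᵐ u : EuclideanSpace ℝ (Fin d), 0 < S u)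
    (k : EuclideanSpace ℝ (Fin d) → EuclideanSpace ℝ (Fin d) → ℝ)
    (hk : ∀ x y, k x y = ∫ u, Real.cos ⟪u, x - y⟫ * S u)
    (f : SchwartzMap (EuclideanSpace ℝ (Fin d)) ℝ)
    (hf : Integrable (fun u => ‖fourierT (fun t => f t) u‖ ^ 2 * (S u)⁻¹))
    (x : EuclideanSpace ℝ (Fin d)) (n : ℕ)
    (pts : Fin n → EuclideanSpace ℝ (Fin d)) (lam : Fin n → ℝ) :
    (f x - ∑ i, lam i * f (pts i)) ^ 2 ≤
      ((2 * Real.pi) ^ (2 * d))⁻¹ *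
        (∫ u, ‖fourierT (fun t => f t) u‖ ^ 2 * (S u)⁻¹) *
        krigQ k x pts lam := by
  set g : EuclideanSpace ℝ (Fin d) → ℂ := fourierT (fun t => f t) with hgdef
  have two_pi_pos : (0:ℝ) < 2 * Real.pi := by positivity
  have h2pi_ne : (2 * Real.pi) ≠ 0 := ne_of_gt two_pi_pos
  set fC : SchwartzMap (EuclideanSpace ℝ (Fin d)) ℂ := schwartzOfReal f with hfCdef
  have hfC : ∀ t, fC t = (f t : ℂ) := fun t => rfl
  -- Step A : relation between fourierT and 𝓕
  have hgF : ∀ u, g u = 𝓕 (⇑fC) ((2 * Real.pi)⁻¹ • u) := by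
    intro u
    rw [Real.fourier_eq']
    rw [hgdef]
    unfold fourierT
    refine integral_congr_ae (Eventually.of_forall fun t => ?_)
    simp only [smul_eq_mul, hfC]
    congr 1
    have hi : ⟪t, (2 * Real.pi)⁻¹ • u⟫ = (2 * Real.pi)⁻¹ * ⟪t, u⟫ :=
      real_inner_smul_right t u _
    rw [hi, real_inner_comm u t]
    have hr : -2 * Real.pi * ((2 * Real.pi)⁻¹ * ⟪u, t⟫) = -⟪u, t⟫ := by
      field_simp
    rw [hr]
    push_cast
    ring
  have hFf_int : Integrable (𝓕 ⇑fC) := by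
    have : 𝓕 ⇑fC = ⇑(SchwartzMap.fourierTransformCLM ℂ fC) := rfl
    rw [this]; exact SchwartzMap.integrable _
  have hg_eq : g = fun u => 𝓕 (⇑fC) ((2 * Real.pi)⁻¹ • u) := funext hgF
  have hg_cont : Continuous g := by
    rw [hg_eq]
    have h1 : Continuous (𝓕 ⇑fC) := (SchwartzMap.fourierTransformCLM ℂ fC).continuous
    exact h1.comp (continuous_const_smul _)
  have hg_int : Integrable g := by
    rw [hg_eq]
    exact hFf_int.comp_smul (inv_ne_zero h2pi_ne)
  have hce : ∀ y : EuclideanSpace ℝ (Fin d),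
      Continuous fun u : EuclideanSpace ℝ (Fin d) => Complex.exp (Complex.I * (⟪u, y⟫ : ℝ)) :=
    fun y => Complex.continuous_exp.comp (continuous_const.mul
      (Complex.continuous_ofReal.comp (continuous_id.inner continuous_const)))
  -- Step C : inversion
  have hinv : ∀ y, (f y : ℂ)
      = (((2 * Real.pi) ^ d : ℝ) : ℂ)⁻¹ * ∫ u, Complex.exp (Complex.I * ⟪u, y⟫) * g u := by
    intro y
    have h1 : 𝓕⁻ (𝓕 ⇑fC) y = fC y := by
      rw [fC.continuous.fourierInv_fourier_eq fC.integrable hFf_int]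
    rw [Real.fourierInv_eq'] at h1
    have h2 := MeasureTheory.Measure.integral_comp_smul (volume)
      (fun ξ => Complex.exp (((2 * Real.pi * ⟪ξ, y⟫ : ℝ) : ℂ) * Complex.I) • 𝓕 (⇑fC) ξ)
      ((2 * Real.pi)⁻¹)
    rw [finrank_euclideanSpace_fin] at h2
    have habs : |(((2 * Real.pi)⁻¹ : ℝ) ^ d)⁻¹| = (2 * Real.pi) ^ d := by
      rw [inv_pow, inv_inv, abs_of_pos (pow_pos two_pi_pos d)]
    rw [habs] at h2
    have h3 : ∀ u, Complex.exp (((2 * Real.pi * ⟪(2 * Real.pi)⁻¹ • u, y⟫ : ℝ) : ℂ) * Complex.I)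
        • 𝓕 (⇑fC) ((2 * Real.pi)⁻¹ • u) = Complex.exp (Complex.I * ⟪u, y⟫) * g u := by
      intro u
      rw [smul_eq_mul, ← hgF u]
      have hin : (2 * Real.pi * ⟪(2 * Real.pi)⁻¹ • u, y⟫ : ℝ) = ⟪u, y⟫ := by
        rw [real_inner_smul_left]; field_simp
      rw [hin, mul_comm Complex.I ((⟪u, y⟫ : ℝ) : ℂ)]
    have h5 : (∫ u, Complex.exp (Complex.I * ⟪u, y⟫) * g u)
        = ((2 * Real.pi) ^ d : ℝ) • (fC y) := by
      rw [← h1, ← h2]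
      exact integral_congr_ae (Eventually.of_forall fun u => (h3 u).symm)
    have h6 : (((2 * Real.pi) ^ d : ℝ) : ℂ) ≠ 0 :=
      Complex.ofReal_ne_zero.mpr (pow_ne_zero d h2pi_ne)
    rw [hfC, Complex.real_smul] at h5
    rw [h5, inv_mul_cancel_left₀ h6]
  -- Step D : the trig polynomial
  set E : EuclideanSpace ℝ (Fin d) → ℂ := fun u =>
    Complex.exp (Complex.I * ⟪u, x⟫) - ∑ i, lam i • Complex.exp (Complex.I * ⟪u, pts i⟫)
    with hEdef
  have hE_cont : Continuous E := by
    rw [hEdef]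
    exact (hce x).sub (continuous_finset_sum _ fun i _ => ((hce (pts i)).const_smul (lam i)))
  have hexp_int : ∀ y : EuclideanSpace ℝ (Fin d),
      Integrable (fun u => Complex.exp (Complex.I * ⟪u, y⟫) * g u) := by
    intro y
    exact hg_int.bdd_mul (hce y).aestronglyMeasurable (c := 1) (Eventually.of_forall fun u => le_of_eq (norm_exp_I_mul _))
  have hgE_split : (fun u => g u * E u) = fun u =>
      Complex.exp (Complex.I * ⟪u, x⟫) * g u
        - ∑ i, (lam i : ℂ) * (Complex.exp (Complex.I * ⟪u, pts i⟫) * g u) := by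
    funext u
    simp only [hEdef]
    rw [mul_sub, Finset.mul_sum, mul_comm (g u)]
    congr 1
    refine Finset.sum_congr rfl fun i _ => ?_
    rw [Complex.real_smul]; ring
  have hsum_int : Integrable
      (fun u => ∑ i, (lam i : ℂ) * (Complex.exp (Complex.I * ⟪u, pts i⟫) * g u)) :=
    integrable_finset_sum _ fun i _ => (hexp_int (pts i)).const_mul _
  have hgE_int : Integrable (fun u => g u * E u) := by
    rw [hgE_split]; exact (hexp_int x).sub hsum_int
  have hsplit : ∫ u, g u * E u = (∫ u, Complex.exp (Complex.I * ⟪u, x⟫) * g u)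
      - ∑ i, (lam i : ℂ) * ∫ u, Complex.exp (Complex.I * ⟪u, pts i⟫) * g u := by
    rw [hgE_split, integral_sub (hexp_int x) hsum_int,
      integral_finset_sum _ (fun i _ => (hexp_int (pts i)).const_mul _)]
    congr 1
    exact Finset.sum_congr rfl fun i _ => integral_const_mul _ _
  have hD : ((f x - ∑ i, lam i * f (pts i) : ℝ) : ℂ)
      = (((2 * Real.pi) ^ d : ℝ) : ℂ)⁻¹ * ∫ u, g u * E u := by
    have hsum : ((∑ i, lam i * f (pts i) : ℝ) : ℂ)
        = ∑ i, (lam i : ℂ) * (f (pts i) : ℂ) := by push_cast; rfl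
    rw [Complex.ofReal_sub, hsum, hinv x]
    simp only [hinv]
    rw [hsplit, mul_sub, Finset.mul_sum]
    congr 1
    refine Finset.sum_congr rfl fun i _ => ?_
    ring
  -- bounds and integrability
  set Λ : ℝ := 1 + ∑ i, |lam i| with hΛdef
  have hEbd : ∀ u, ‖E u‖ ≤ Λ := by
    intro u
    simp only [hEdef, hΛdef]
    refine (norm_sub_le _ _).trans ?_
    rw [norm_exp_I_mul]
    refine add_le_add_right ((norm_sum_le _ _).trans ?_) 1
    refine le_of_eq (Finset.sum_congr rfl fun i _ => ?_)
    rw [norm_smul, norm_exp_I_mul, mul_one, Real.norm_eq_abs]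
  have hE2S_int : Integrable (fun u => ‖E u‖ ^ 2 * S u) := by
    refine hS_int.bdd_mul ((hE_cont.norm.pow 2)).aestronglyMeasurable (c := Λ ^ 2) (Eventually.of_forall fun u => ?_)
    rw [Real.norm_eq_abs, abs_of_nonneg (by positivity)]
    exact pow_le_pow_left₀ (norm_nonneg _) (hEbd u) 2
  set A : ℝ := ∫ u, ‖g u‖ ^ 2 * (S u)⁻¹ with hAdef
  set B : ℝ := ∫ u, ‖E u‖ ^ 2 * S u with hBdef
  set τ : ℝ := ∫ u, ‖g u‖ * ‖E u‖ with hτdef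
  have hA0 : 0 ≤ A := integral_nonneg fun u => mul_nonneg (by positivity) (inv_nonneg.mpr (hS_nonneg u))
  have hB0 : 0 ≤ B := integral_nonneg fun u => mul_nonneg (by positivity) (hS_nonneg u)
  have hτ0 : 0 ≤ τ := integral_nonneg fun u => by positivity
  have hcs : τ ^ 2 ≤ A * B := by
    refine cs_aux hA0 hB0 hτ0 fun ε hε => ?_
    have hint : Integrable (fun u =>
        ε / 2 * (‖g u‖ ^ 2 * (S u)⁻¹) + 1 / (2 * ε) * (‖E u‖ ^ 2 * S u)) :=
      (hf.const_mul _).add (hE2S_int.const_mul _)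
    have hle : ∀ᵐ u, ‖g u‖ * ‖E u‖ ≤
        ε / 2 * (‖g u‖ ^ 2 * (S u)⁻¹) + 1 / (2 * ε) * (‖E u‖ ^ 2 * S u) := by
      filter_upwards [hS_pos] with u hSu
      have key : ε / 2 * (‖g u‖ ^ 2 * (S u)⁻¹) + 1 / (2 * ε) * (‖E u‖ ^ 2 * S u)
          - ‖g u‖ * ‖E u‖ = (ε * ‖g u‖ - S u * ‖E u‖) ^ 2 / (2 * ε * S u) := by
        field_simp
        ring
      nlinarith [div_nonneg (sq_nonneg (ε * ‖g u‖ - S u * ‖E u‖))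
        (by positivity : (0:ℝ) ≤ 2 * ε * S u)]
    have hm := integral_mono_of_nonneg (Eventually.of_forall fun u => by positivity) hint hle
    rw [integral_add (hf.const_mul _) (hE2S_int.const_mul _),
      integral_const_mul, integral_const_mul] at hm
    exact hm
  -- the quadratic form
  have hsq : ∀ u, ‖E u‖ ^ 2 = 1 - 2 * ∑ i, lam i * Real.cos ⟪u, x - pts i⟫
      + ∑ i, ∑ j, lam i * lam j * Real.cos ⟪u, pts i - pts j⟫ := by
    intro u
    simp only [hEdef]
    rw [norm_sub_sq_real]
    have hA1 : ‖Complex.exp (Complex.I * (⟪u, x⟫ : ℝ))‖ ^ 2 = 1 := by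
      rw [norm_exp_I_mul]; norm_num
    have hAB : ⟪Complex.exp (Complex.I * (⟪u, x⟫ : ℝ)),
        ∑ i, lam i • Complex.exp (Complex.I * (⟪u, pts i⟫ : ℝ))⟫
        = ∑ i, lam i * Real.cos ⟪u, x - pts i⟫ := by
      rw [inner_sum]
      refine Finset.sum_congr rfl fun i _ => ?_
      rw [real_inner_smul_right, exp_inner_real, inner_sub_right]
    have hBB : ‖∑ i, lam i • Complex.exp (Complex.I * (⟪u, pts i⟫ : ℝ))‖ ^ 2
        = ∑ i, ∑ j, lam i * lam j * Real.cos ⟪u, pts i - pts j⟫ := by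
      rw [← real_inner_self_eq_norm_sq, sum_inner]
      refine Finset.sum_congr rfl fun i _ => ?_
      rw [real_inner_smul_left, inner_sum, Finset.mul_sum]
      refine Finset.sum_congr rfl fun j _ => ?_
      rw [real_inner_smul_right, exp_inner_real, inner_sub_right]
      ring
    rw [hA1, hAB, hBB]
  have hcosS_int : ∀ y z : EuclideanSpace ℝ (Fin d),
      Integrable (fun u => Real.cos ⟪u, y - z⟫ * S u) := by
    intro y z
    refine hS_int.bdd_mul (Real.continuous_cos.comp
      (continuous_id.inner continuous_const)).aestronglyMeasurable (c := 1) (Eventually.of_forall fun u => ?_)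
    rw [Real.norm_eq_abs]; exact Real.abs_cos_le_one _
  have hI2 : Integrable (fun u => 2 * ∑ i, lam i * (Real.cos ⟪u, x - pts i⟫ * S u)) :=
    (integrable_finset_sum _ fun i _ => (hcosS_int x (pts i)).const_mul _).const_mul 2
  have hI2' : Integrable (fun u => ∑ i, lam i * (Real.cos ⟪u, x - pts i⟫ * S u)) :=
    integrable_finset_sum _ fun i _ => (hcosS_int x (pts i)).const_mul _
  have hI3 : Integrable (fun u =>
      ∑ i, ∑ j, lam i * lam j * (Real.cos ⟪u, pts i - pts j⟫ * S u)) :=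
    integrable_finset_sum _ fun i _ => integrable_finset_sum _ fun j _ =>
      (hcosS_int (pts i) (pts j)).const_mul _
  have hBQ : B = krigQ k x pts lam := by
    have h1 : (fun u => ‖E u‖ ^ 2 * S u) = fun u =>
        S u - 2 * ∑ i, lam i * (Real.cos ⟪u, x - pts i⟫ * S u)
          + ∑ i, ∑ j, lam i * lam j * (Real.cos ⟪u, pts i - pts j⟫ * S u) := by
      funext u
      rw [hsq u]
      simp only [sub_mul, add_mul, one_mul, Finset.sum_mul, mul_assoc]
    have e1 : ∫ u, Real.cos ⟪u, x - x⟫ * S u = ∫ u, S u := by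
      refine integral_congr_ae (Eventually.of_forall fun u => ?_)
      rw [sub_self]
      simp [inner_zero_right]
    have hI12 : Integrable (fun u =>
        S u - 2 * ∑ i, lam i * (Real.cos ⟪u, x - pts i⟫ * S u)) := hS_int.sub hI2
    rw [hBdef, h1, integral_add hI12 hI3, integral_sub hS_int hI2]
    rw [integral_const_mul, integral_finset_sum _ (fun i _ => (hcosS_int x (pts i)).const_mul _)]
    rw [integral_finset_sum _ (fun i _ => integrable_finset_sum _ fun j _ =>
      (hcosS_int (pts i) (pts j)).const_mul _)]
    unfold krigQ
    simp only [hk]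
    simp_rw [integral_const_mul, integral_finset_sum _ (fun j _ =>
      (hcosS_int _ _).const_mul _)]
    simp_rw [integral_const_mul]
    rw [e1]
  -- final assembly
  have hDabs : |f x - ∑ i, lam i * f (pts i)| ≤ ((2 * Real.pi) ^ d)⁻¹ * τ := by
    have h1 : |f x - ∑ i, lam i * f (pts i)|
        = ‖((f x - ∑ i, lam i * f (pts i) : ℝ) : ℂ)‖ := by
      rw [Complex.norm_real, Real.norm_eq_abs]
    have h2 : ‖((((2 * Real.pi) ^ d : ℝ)) : ℂ)⁻¹‖ = ((2 * Real.pi) ^ d)⁻¹ := by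
      rw [norm_inv, Complex.norm_real, Real.norm_eq_abs, abs_of_pos (pow_pos two_pi_pos d)]
    rw [h1, hD, norm_mul, h2]
    refine mul_le_mul_of_nonneg_left ?_ (by positivity)
    refine (norm_integral_le_integral_norm _).trans (le_of_eq ?_)
    rw [hτdef]
    exact integral_congr_ae (Eventually.of_forall fun u => norm_mul _ _)
  calc (f x - ∑ i, lam i * f (pts i)) ^ 2
      = |f x - ∑ i, lam i * f (pts i)| ^ 2 := (sq_abs _).symm
    _ ≤ (((2 * Real.pi) ^ d)⁻¹ * τ) ^ 2 :=
        pow_le_pow_left₀ (abs_nonneg _) hDabs 2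
    _ = (((2 * Real.pi) ^ d)⁻¹) ^ 2 * τ ^ 2 := by ring
    _ ≤ (((2 * Real.pi) ^ d)⁻¹) ^ 2 * (A * B) :=
        mul_le_mul_of_nonneg_left hcs (by positivity)
    _ = ((2 * Real.pi) ^ (2 * d))⁻¹ * A * krigQ k x pts lam := by
        rw [hBQ, inv_pow, ← pow_mul, mul_comm d 2]
        ring
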